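/- arXiv:1504.04985 — 2 statements merged into one kernel-verified Lean document; each statement's English description precedes it below -/
import Mathlib

section
/- Let S be a finite nonempty set of primes, let k be the product of the elements of S, and let f = (X² − X)/k ∈ ℚ[X]. Let p ∈ S, let n ≥ 0 be an integer, let a ∈ ℤ, and let α ∈ ℚ̄ satisfy f^[n](α) = a. Then the minimal polynomial of α over ℚ splits into linear factors over ℚ_p, and each of its roots in ℚ_p lies in ℤ_p. -/
open Polynomial

/-- Iterate of a polynomial under composition. -/
noncomputable def auxFit12 (f : Polynomial ℚ) : ℕ → Polynomial ℚ
  | 0 => X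
  | n + 1 => (auxFit12 f n).comp f

lemma auxIter12 (f : Polynomial ℚ) : ∀ (n : ℕ) (x : AlgebraicClosure ℚ),
    (fun x : AlgebraicClosure ℚ => aeval x f)^[n] x = aeval x (auxFit12 f n)
  | 0, x => by simp [auxFit12]
  | n + 1, x => by
    rw [Function.iterate_succ_apply, auxIter12 f n]
    simp [auxFit12, aeval_comp]

lemma auxDeg12 (k : ℕ) (f : Polynomial ℚ) (hk0 : (k : ℚ) ≠ 0)
    (hf : f = C ((k : ℚ))⁻¹ * (X ^ 2 - X)) : ∀ n, (auxFit12 f n).natDegree = 2 ^ n := by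
  have hdf : f.natDegree = 2 := by
    rw [hf, natDegree_C_mul (inv_ne_zero hk0)]
    compute_degree!
  intro n
  induction n with
  | zero => simp [auxFit12]
  | succ n ih =>
    show ((auxFit12 f n).comp f).natDegree = 2 ^ (n + 1)
    rw [natDegree_comp, ih, hdf, pow_succ]

lemma auxSplitsProd12 {K : Type*} [Field K] (s : Multiset (Polynomial K))
    (h : ∀ q ∈ s, Splits q) : Splits s.prod := by
  induction s using Multiset.induction_on with
  | empty => simpa using Splits.one
  | cons a s ih =>
    rw [Multiset.prod_cons]
    exact Splits.mul (h a (Multiset.mem_cons_self a s))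
      (ih fun q hq => h q (Multiset.mem_cons_of_mem hq))

/-- Hensel step: the quadratic `z² - z = k r` has a root in `ℤ_p` when `p ∣ k`. -/
lemma auxQuad12 (p : ℕ) [Fact p.Prime] (k : ℕ) (hpk : (p : ℤ) ∣ (k : ℤ))
    (r : ℚ_[p]) (hr : ‖r‖ ≤ 1) :
    ∃ z : ℚ_[p], ‖z‖ ≤ 1 ∧ z ^ 2 - z = (k : ℚ_[p]) * r := by
  set R : ℤ_[p] := ⟨r, hr⟩ with hR
  set F : Polynomial ℤ_[p] := X ^ 2 - X - C ((k : ℤ_[p]) * R) with hF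
  have heval0 : F.eval 0 = -((k : ℤ_[p]) * R) := by simp [hF]
  have hderiv : F.derivative.eval 0 = -1 := by
    simp [hF, derivative_X_pow]
  have hknorm : ‖(k : ℤ_[p])‖ < 1 := by
    have : ‖((k : ℤ) : ℤ_[p])‖ < 1 := (PadicInt.norm_int_lt_one_iff_dvd _).2 hpk
    simpa using this
  have hcond : ‖F.eval 0‖ < ‖F.derivative.eval 0‖ ^ 2 := by
    rw [heval0, hderiv]
    have h1 : ‖(-((k : ℤ_[p]) * R))‖ = ‖(k : ℤ_[p])‖ * ‖R‖ := by
      rw [norm_neg, norm_mul]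
    have h2 : ‖R‖ ≤ 1 := R.norm_le_one
    have h3 : (0:ℝ) ≤ ‖(k : ℤ_[p])‖ := norm_nonneg _
    have : ‖(-1 : ℤ_[p])‖ = 1 := by simp
    rw [this, h1, one_pow]
    nlinarith
  obtain ⟨z0, hz0, -⟩ := hensels_lemma hcond
  have hz0' : z0 ^ 2 - z0 - (k : ℤ_[p]) * R = 0 := by
    have := hz0
    simpa [hF] using this
  refine ⟨(z0 : ℚ_[p]), ?_, ?_⟩
  · rw [PadicInt.padic_norm_e_of_padicInt]; exact z0.norm_le_one
  · have := congrArg (fun t : ℤ_[p] => (t : ℚ_[p])) hz0'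
    push_cast at this
    linear_combination this


lemma auxMain12 (p : ℕ) [Fact p.Prime] (k : ℕ) (hk0 : (k : ℚ) ≠ 0) (hpk : (p : ℤ) ∣ (k : ℤ))
    (f : Polynomial ℚ) (hf : f = C ((k : ℚ))⁻¹ * (X ^ 2 - X)) (n : ℕ)
    (b : ℚ_[p]) (hb : ‖b‖ ≤ 1) :
    Splits ((auxFit12 f n).map (algebraMap ℚ ℚ_[p]) - C b) ∧
    ∀ z : ℚ_[p], ((auxFit12 f n).map (algebraMap ℚ ℚ_[p]) - C b).eval z = 0 → ‖z‖ ≤ 1 := by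
  set φ : ℚ →+* ℚ_[p] := (algebraMap ℚ ℚ_[p]) with hφ
  have hk0' : ((k : ℚ_[p])) ≠ 0 := by
    exact_mod_cast fun h => hk0 (by exact_mod_cast h)
  have hq : f.map φ = C ((k : ℚ_[p]))⁻¹ * (X ^ 2 - X) := by
    rw [hf]
    simp [Polynomial.map_mul, Polynomial.map_sub, Polynomial.map_pow, map_inv₀, map_natCast]
  have hknorm : ‖(k : ℚ_[p])‖ ≤ 1 := by
    have := Padic.norm_int_le_one (p := p) (k : ℤ)
    simpa using this
  induction n with
  | zero =>
    constructor
    · simpa [auxFit12] using Splits.X_sub_C b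
    · intro z hz
      simp only [auxFit12, Polynomial.map_X, eval_sub, eval_X, eval_C] at hz
      rw [sub_eq_zero] at hz
      rwa [hz]
  | succ n ih =>
    obtain ⟨hs, hrt⟩ := ih
    set P : Polynomial ℚ_[p] := (auxFit12 f n).map φ with hP
    set q : Polynomial ℚ_[p] := f.map φ with hqdef
    have hcomp : (auxFit12 f (n + 1)).map φ - C b = (P - C b).comp q := by
      show ((auxFit12 f n).comp f).map φ - C b = _
      rw [Polynomial.map_comp, sub_comp, C_comp]
    -- for each root r of P - C b build the factorization of q - C r
    have hfac : ∀ r : ℚ_[p], ‖r‖ ≤ 1 →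
        Splits ((X - C r).comp q) := by
      intro r hr
      obtain ⟨z, hz1, hz2⟩ := auxQuad12 p k hpk r hr
      have expand : (X - C z) * (X - C (1 - z)) = X ^ 2 - X - C (z ^ 2 - z) := by
        simp only [map_sub, map_pow, map_one]
        ring
      have hqr : (X - C r).comp q = C ((k : ℚ_[p]))⁻¹ * ((X - C z) * (X - C (1 - z))) := by
        rw [sub_comp, X_comp, C_comp, expand, hz2, hq]
        simp only [mul_sub]
        rw [← C_mul, inv_mul_cancel_left₀ hk0']
      rw [hqr]
      exact Splits.mul (Splits.C _)
        (Splits.mul (Splits.X_sub_C _) (Splits.X_sub_C _))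
    constructor
    · rw [hcomp, hs.eq_prod_roots, mul_comp, C_comp, multiset_prod_comp,
        Multiset.map_map]
      refine Splits.mul (Splits.C _) (auxSplitsProd12 _ ?_)
      intro Q hQ
      obtain ⟨r, hrmem, rfl⟩ := Multiset.mem_map.1 hQ
      have hr1 : ‖r‖ ≤ 1 := hrt r ((mem_roots'.1 hrmem).2)
      exact hfac r hr1
    · intro z hz
      rw [hcomp, eval_comp] at hz
      have hw : ‖q.eval z‖ ≤ 1 := hrt _ hz
      have heval : q.eval z = (k : ℚ_[p])⁻¹ * (z ^ 2 - z) := by rw [hq]; simp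
      have hzz : z ^ 2 - z = (k : ℚ_[p]) * q.eval z := by
        rw [heval, mul_inv_cancel_left₀ hk0']
      have hnorm : ‖z ^ 2 - z‖ ≤ 1 := by
        rw [hzz, norm_mul]
        calc ‖(k : ℚ_[p])‖ * ‖q.eval z‖ ≤ 1 * 1 :=
              mul_le_mul hknorm hw (norm_nonneg _) (by linarith [norm_nonneg ((k : ℚ_[p]))])
          _ = 1 := mul_one 1
      by_contra hgt
      push_neg at hgt
      have h2 : ‖z ^ 2‖ = ‖z‖ ^ 2 := norm_pow z 2
      have hne : ‖z ^ 2‖ ≠ ‖-z‖ := by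
        rw [norm_neg, h2]
        nlinarith
      have hmax : ‖z ^ 2 - z‖ = max ‖z ^ 2‖ ‖-z‖ := by
        rw [sub_eq_add_neg]
        exact Padic.add_eq_max_of_ne hne
      have : (1 : ℝ) < ‖z ^ 2 - z‖ := by
        rw [hmax]
        have : (1 : ℝ) < ‖z ^ 2‖ := by rw [h2]; nlinarith
        exact lt_of_lt_of_le this (le_max_left _ _)
      linarith

/-- Example 3.6 (key computation): let `S` be a finite nonempty set of primes, `k` their
product, and `f = (X² − X)/k ∈ ℚ[X]`.  If `p ∈ S` and `α ∈ ℚ̄` satisfies `f^[n](α) = a` for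
some integer `a` and some `n ≥ 0`, then the minimal polynomial of `α` over `ℚ` splits into
linear factors over `ℚ_p`, and all of its roots in `ℚ_p` are `p`-adic integers. -/
theorem stmt_12 (S : Finset ℕ) (hSprime : ∀ q ∈ S, q.Prime) (hSne : S.Nonempty)
    (k : ℕ) (hk : k = ∏ q ∈ S, q)
    (f : Polynomial ℚ) (hf : f = C ((k : ℚ))⁻¹ * (X ^ 2 - X))
    (p : ℕ) [Fact p.Prime] (hp : p ∈ S)
    (n : ℕ) (a : ℤ) (α : AlgebraicClosure ℚ)
    (hα : (fun x : AlgebraicClosure ℚ => aeval x f)^[n] α = (a : AlgebraicClosure ℚ)) :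
    Splits ((minpoly ℚ α).map (algebraMap ℚ ℚ_[p])) ∧
    ∀ z : ℚ_[p], aeval z (minpoly ℚ α) = 0 → ‖z‖ ≤ 1 := by
  have hkne : k ≠ 0 := by
    rw [hk]
    exact Finset.prod_ne_zero_iff.2 fun q hq => (hSprime q hq).ne_zero
  have hk0 : (k : ℚ) ≠ 0 := by exact_mod_cast hkne
  have hpk : (p : ℤ) ∣ (k : ℤ) := by
    exact_mod_cast Int.natCast_dvd_natCast.2 (hk ▸ Finset.dvd_prod_of_mem _ hp)
  set φ : ℚ →+* ℚ_[p] := algebraMap ℚ ℚ_[p] with hφ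
  set g : Polynomial ℚ := auxFit12 f n - C ((a : ℚ)) with hg
  have hg0 : aeval α g = 0 := by
    rw [hg, map_sub, ← auxIter12, hα, aeval_C]
    simp
  have hdvd : minpoly ℚ α ∣ g := minpoly.dvd ℚ α hg0
  have hgne : g ≠ 0 := by
    intro h0
    have hd := auxDeg12 k f hk0 hf n
    have : auxFit12 f n = C ((a : ℚ)) := by
      rw [← sub_eq_zero]; exact h0
    rw [this, natDegree_C] at hd
    exact pow_ne_zero n two_ne_zero hd.symm
  have hmap : g.map φ = (auxFit12 f n).map φ - C ((a : ℚ_[p])) := by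
    rw [hg, Polynomial.map_sub, map_C, map_intCast]
  obtain ⟨hs, hrb⟩ := auxMain12 p k hk0 hpk f hf n ((a : ℚ_[p])) (Padic.norm_int_le_one a)
  have hgs : Splits (g.map φ) := by
    rw [hmap]
    exact hs
  constructor
  · exact Splits.of_dvd hgs (Polynomial.map_ne_zero hgne) (Polynomial.map_dvd φ hdvd)
  · intro z hz
    obtain ⟨h, hh⟩ := hdvd
    have h1 : aeval z g = 0 := by rw [hh, map_mul, hz, zero_mul]
    have h2 : (g.map φ).eval z = 0 := by rwa [eval_map, ← aeval_def]
    exact hrb z (by rwa [hmap] at h2)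
end

section
/- Let S be a finite nonempty set of primes, let k be the product of the elements of S, and let f = (X² − X)/k ∈ ℚ[X]. Then every preperiodic point of f in ℚ̄ lies in ℚ^tp for every p ∈ S, and the set of preperiodic points of f in ℚ̄ is infinite; in particular, the field ⋂_{p∈S} ℚ^tp contains infinitely many preperiodic points of f. -/
open Polynomial
open scoped NNReal
open scoped NNReal

namespace Ex36T

noncomputable def fc (f : ℚ[X]) : ℕ → ℚ[X]
  | 0 => X
  | n+1 => (fc f n).comp f

lemma aeval_fc {A : Type*} [CommRing A] [Algebra ℚ A] (f : ℚ[X]) (n : ℕ) (x : A) :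
    aeval x (fc f n) = (fun t : A => aeval t f)^[n] x := by
  induction n generalizing x with
  | zero => simp [fc]
  | succ n ih =>
      rw [fc, aeval_comp, ih, Function.iterate_succ_apply]

lemma iterate_mod {α : Type*} (g : α → α) (x : α) (N : ℕ) (hN : 0 < N)
    (hx : g^[N] x = x) : ∀ j, g^[j] x = g^[j % N] x := by
  intro j
  induction j using Nat.strong_induction_on with
  | _ j ih =>
    rcases lt_or_ge j N with h | h
    · rw [Nat.mod_eq_of_lt h]
    · have h1 : j = (j - N) + N := by omega
      rw [Nat.mod_eq_sub_mod h, ← ih (j - N) (by omega)]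
      conv_lhs => rw [h1]
      rw [Function.iterate_add_apply, hx]

section Padic

variable (p : ℕ) [hp : Fact p.Prime] (k : ℕ)

lemma norm_k (hpk : p ∣ k) : ‖(k : ℤ_[p])‖ ≤ (p : ℝ)⁻¹ := by
  obtain ⟨c, rfl⟩ := hpk
  push_cast
  rw [norm_mul, PadicInt.norm_p]
  calc (p:ℝ)⁻¹ * ‖(c : ℤ_[p])‖ ≤ (p:ℝ)⁻¹ * 1 := by
        apply mul_le_mul_of_nonneg_left (PadicInt.norm_le_one _)
        positivity
    _ = (p:ℝ)⁻¹ := mul_one _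

lemma pinv_lt_one : (p : ℝ)⁻¹ < 1 := by
  have : (1:ℝ) < p := by exact_mod_cast hp.out.one_lt
  rw [inv_lt_one_iff₀]; right; exact this

/-- `T b y` is the map whose fixed point gives the inverse branch of `f` over `y`. -/
noncomputable def T (b : Bool) (y β : ℤ_[p]) : ℤ_[p] :=
  cond b (y - (k : ℤ_[p]) * β^2) ((k : ℤ_[p]) * β^2 - y)

lemma norm_sq_diff (hpk : p ∣ k) (β β' : ℤ_[p]) :
    ‖(k : ℤ_[p]) * β^2 - (k : ℤ_[p]) * β'^2‖ ≤ (p:ℝ)⁻¹ * ‖β - β'‖ := by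
  have h : (k : ℤ_[p]) * β^2 - (k : ℤ_[p]) * β'^2 = ((k : ℤ_[p]) * (β + β')) * (β - β') := by
    ring
  rw [h, norm_mul, norm_mul]
  have h1 := norm_k p k hpk
  have h2 := PadicInt.norm_le_one (β + β')
  calc ‖(k:ℤ_[p])‖ * ‖β + β'‖ * ‖β - β'‖ ≤ (p:ℝ)⁻¹ * 1 * ‖β - β'‖ := by
        apply mul_le_mul_of_nonneg_right _ (norm_nonneg _)
        exact mul_le_mul h1 h2 (norm_nonneg _) (by positivity)
    _ = (p:ℝ)⁻¹ * ‖β - β'‖ := by ring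

lemma T_lip (hpk : p ∣ k) (b : Bool) (y β β' : ℤ_[p]) :
    ‖T p k b y β - T p k b y β'‖ ≤ (p:ℝ)⁻¹ * ‖β - β'‖ := by
  have h := norm_sq_diff p k hpk β β'
  cases b
  · simp only [T, cond]
    rw [show (k:ℤ_[p])*β^2 - y - ((k:ℤ_[p])*β'^2 - y) =
      (k:ℤ_[p])*β^2 - (k:ℤ_[p])*β'^2 by ring]
    exact h
  · simp only [T, cond]
    rw [show y - (k:ℤ_[p])*β^2 - (y - (k:ℤ_[p])*β'^2) =
      -((k:ℤ_[p])*β^2 - (k:ℤ_[p])*β'^2) by ring, norm_neg]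
    exact h

lemma T_contract (hpk : p ∣ k) (b : Bool) (y : ℤ_[p]) :
    ContractingWith (p : ℝ≥0)⁻¹ (T p k b y) := by
  constructor
  · rw [← NNReal.coe_lt_coe]
    push_cast
    exact pinv_lt_one p
  · apply LipschitzWith.of_dist_le_mul
    intro β β'
    rw [dist_eq_norm, dist_eq_norm]
    calc ‖T p k b y β - T p k b y β'‖ ≤ (p:ℝ)⁻¹ * ‖β - β'‖ := T_lip p k hpk b y β β'
      _ = ((p : ℝ≥0)⁻¹ : ℝ) * ‖β - β'‖ := by push_cast; ring

/-- fixed point of `T b y`. -/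
noncomputable def βf (hpk : p ∣ k) (b : Bool) (y : ℤ_[p]) : ℤ_[p] :=
  ContractingWith.fixedPoint (T p k b y) (T_contract p k hpk b y)

lemma βf_fix (hpk : p ∣ k) (b : Bool) (y : ℤ_[p]) :
    T p k b y (βf p k hpk b y) = βf p k hpk b y :=
  ContractingWith.fixedPoint_isFixedPt (T_contract p k hpk b y)

lemma βf_stable (hpk : p ∣ k) (b : Bool) (y y' : ℤ_[p]) :
    ‖βf p k hpk b y - βf p k hpk b y'‖ ≤ ‖y - y'‖ := by
  have key : ‖βf p k hpk b y - βf p k hpk b y'‖ ≤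
      max ((p:ℝ)⁻¹ * ‖βf p k hpk b y - βf p k hpk b y'‖) ‖y - y'‖ := by
    conv_lhs => rw [← βf_fix p k hpk b y, ← βf_fix p k hpk b y']
    have hsq := norm_sq_diff p k hpk (βf p k hpk b y) (βf p k hpk b y')
    set β := βf p k hpk b y
    set β' := βf p k hpk b y'
    cases b
    · simp only [T, cond]
      rw [show (k:ℤ_[p])*β^2 - y - ((k:ℤ_[p])*β'^2 - y') =
        ((k:ℤ_[p])*β^2 - (k:ℤ_[p])*β'^2) + (y' - y) by ring]
      refine le_trans (PadicInt.nonarchimedean _ _) ?_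
      apply max_le_max hsq
      rw [show y' - y = -(y - y') by ring, norm_neg]
    · simp only [T, cond]
      rw [show y - (k:ℤ_[p])*β^2 - (y' - (k:ℤ_[p])*β'^2) =
        -((k:ℤ_[p])*β^2 - (k:ℤ_[p])*β'^2) + (y - y') by ring]
      refine le_trans (PadicInt.nonarchimedean _ _) ?_
      apply max_le_max _ le_rfl
      rw [norm_neg]; exact hsq
  by_contra hcon
  push_neg at hcon
  set β := βf p k hpk b y
  set β' := βf p k hpk b y'
  have hd0 : (0:ℝ) ≤ ‖y - y'‖ := norm_nonneg _
  have hdpos : 0 < ‖β - β'‖ := lt_of_le_of_lt hd0 hcon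
  rcases max_cases ((p:ℝ)⁻¹ * ‖β - β'‖) ‖y - y'‖ with ⟨h1, _⟩ | ⟨h1, _⟩
  · rw [h1] at key
    nlinarith [pinv_lt_one p (hp := hp)]
  · rw [h1] at key; linarith


variable (f : ℚ[X])

/-- the inverse branch of `f` through the ball around `b`. -/
noncomputable def rt (hpk : p ∣ k) (b : Bool) (y : ℤ_[p]) : ℤ_[p] :=
  cond b (1 + (k : ℤ_[p]) * βf p k hpk b y) ((k : ℤ_[p]) * βf p k hpk b y)

lemma rt_lip (hpk : p ∣ k) (b : Bool) (y y' : ℤ_[p]) :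
    ‖rt p k hpk b y - rt p k hpk b y'‖ ≤ (p:ℝ)⁻¹ * ‖y - y'‖ := by
  have h : rt p k hpk b y - rt p k hpk b y' =
      (k : ℤ_[p]) * (βf p k hpk b y - βf p k hpk b y') := by
    cases b <;> simp only [rt, cond] <;> ring
  rw [h, norm_mul]
  exact mul_le_mul (norm_k p k hpk) (βf_stable p k hpk b y y') (norm_nonneg _)
    (by positivity)

lemma rt_ball (hpk : p ∣ k) (b : Bool) (y : ℤ_[p]) :
    ‖((rt p k hpk b y : ℤ_[p]) : ℚ_[p]) - (cond b 1 0 : ℚ_[p])‖ ≤ (p:ℝ)⁻¹ := by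
  have h : ((rt p k hpk b y : ℤ_[p]) : ℚ_[p]) - (cond b 1 0 : ℚ_[p]) =
      (((k : ℤ_[p]) * βf p k hpk b y : ℤ_[p]) : ℚ_[p]) := by
    cases b <;> simp only [rt, cond] <;> push_cast <;> ring
  rw [h, ← PadicInt.norm_def, norm_mul]
  calc ‖(k:ℤ_[p])‖ * ‖βf p k hpk b y‖ ≤ (p:ℝ)⁻¹ * 1 :=
        mul_le_mul (norm_k p k hpk) (PadicInt.norm_le_one _) (norm_nonneg _) (by positivity)
    _ = (p:ℝ)⁻¹ := mul_one _

lemma aeval_f (hf : f = C ((k : ℚ))⁻¹ * (X ^ 2 - X)) (x : ℚ_[p]) :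
    aeval x f = ((k : ℚ_[p]))⁻¹ * (x ^ 2 - x) := by
  rw [hf]
  simp [map_inv₀]

lemma rt_eval (hk : k ≠ 0) (hf : f = C ((k : ℚ))⁻¹ * (X ^ 2 - X)) (hpk : p ∣ k)
    (b : Bool) (y : ℤ_[p]) :
    aeval ((rt p k hpk b y : ℤ_[p]) : ℚ_[p]) f = (y : ℚ_[p]) := by
  have hkQ : ((k : ℚ_[p])) ≠ 0 := Nat.cast_ne_zero.mpr hk
  have hfix := βf_fix p k hpk b y
  have hfixQ : (((T p k b y (βf p k hpk b y)) : ℤ_[p]) : ℚ_[p]) =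
      ((βf p k hpk b y : ℤ_[p]) : ℚ_[p]) := by rw [hfix]
  rw [aeval_f p k f hf]
  cases b
  · simp only [T, cond] at hfixQ
    push_cast at hfixQ ⊢
    simp only [rt, cond]
    push_cast
    field_simp
    linear_combination hfixQ
  · simp only [T, cond] at hfixQ
    push_cast at hfixQ ⊢
    simp only [rt, cond]
    push_cast
    field_simp
    linear_combination (-(k : ℚ_[p])) * hfixQ


/-- iterated inverse branches along a word. -/
noncomputable def pt (hpk : p ∣ k) : List Bool → ℤ_[p] → ℤ_[p]
  | [], y => y
  | b :: l, y => rt p k hpk b (pt hpk l y)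

lemma pt_lip (hpk : p ∣ k) (l : List Bool) (y y' : ℤ_[p]) :
    ‖pt p k hpk l y - pt p k hpk l y'‖ ≤ ‖y - y'‖ := by
  induction l with
  | nil => exact le_rfl
  | cons b l ih =>
      show ‖rt p k hpk b (pt p k hpk l y) - rt p k hpk b (pt p k hpk l y')‖ ≤ _
      refine le_trans (rt_lip p k hpk b _ _) ?_
      have h1 : (0:ℝ) ≤ (p:ℝ)⁻¹ := by positivity
      calc (p:ℝ)⁻¹ * ‖pt p k hpk l y - pt p k hpk l y'‖ ≤ 1 * ‖y - y'‖ := by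
            apply mul_le_mul (le_of_lt (pinv_lt_one p)) ih (norm_nonneg _) zero_le_one
        _ = ‖y - y'‖ := one_mul _

lemma pt_cons_lip (hpk : p ∣ k) (b : Bool) (l : List Bool) (y y' : ℤ_[p]) :
    ‖pt p k hpk (b :: l) y - pt p k hpk (b :: l) y'‖ ≤ (p:ℝ)⁻¹ * ‖y - y'‖ := by
  show ‖rt p k hpk b (pt p k hpk l y) - rt p k hpk b (pt p k hpk l y')‖ ≤ _
  refine le_trans (rt_lip p k hpk b _ _) ?_
  have h1 : (0:ℝ) ≤ (p:ℝ)⁻¹ := by positivity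
  exact mul_le_mul_of_nonneg_left (pt_lip p k hpk l y y') h1

lemma pt_contract (hpk : p ∣ k) (b : Bool) (l : List Bool) :
    ContractingWith (p : ℝ≥0)⁻¹ (pt p k hpk (b :: l)) := by
  constructor
  · rw [← NNReal.coe_lt_coe]
    push_cast
    exact pinv_lt_one p
  · apply LipschitzWith.of_dist_le_mul
    intro y y'
    rw [dist_eq_norm, dist_eq_norm]
    calc ‖pt p k hpk (b::l) y - pt p k hpk (b::l) y'‖ ≤ (p:ℝ)⁻¹ * ‖y - y'‖ :=
          pt_cons_lip p k hpk b l y y'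
      _ = ((p : ℝ≥0)⁻¹ : ℝ) * ‖y - y'‖ := by push_cast; ring

/-- the periodic point with itinerary `(b :: l)^∞`. -/
noncomputable def xf (hpk : p ∣ k) (b : Bool) (l : List Bool) : ℤ_[p] :=
  ContractingWith.fixedPoint (pt p k hpk (b :: l)) (pt_contract p k hpk b l)

lemma xf_fix (hpk : p ∣ k) (b : Bool) (l : List Bool) :
    pt p k hpk (b :: l) (xf p k hpk b l) = xf p k hpk b l :=
  ContractingWith.fixedPoint_isFixedPt (pt_contract p k hpk b l)

lemma phi_drop (hk : k ≠ 0) (hf : f = C ((k : ℚ))⁻¹ * (X ^ 2 - X)) (hpk : p ∣ k) :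
    ∀ (l : List Bool) (y : ℤ_[p]) (j : ℕ), j ≤ l.length →
      (fun x : ℚ_[p] => aeval x f)^[j] ((pt p k hpk l y : ℤ_[p]) : ℚ_[p]) =
        ((pt p k hpk (l.drop j) y : ℤ_[p]) : ℚ_[p]) := by
  intro l
  induction l with
  | nil =>
      intro y j hj
      simp only [List.length_nil, Nat.le_zero] at hj
      subst hj
      simp
  | cons b l ih =>
      intro y j hj
      cases j with
      | zero => simp
      | succ i =>
          rw [Function.iterate_succ_apply]
          have h1 : (aeval ((pt p k hpk (b :: l) y : ℤ_[p]) : ℚ_[p])) f =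
              ((pt p k hpk l y : ℤ_[p]) : ℚ_[p]) :=
            rt_eval p k f hk hf hpk b _
          rw [h1, ih y i (by simpa using hj)]
          rfl

lemma xf_per (hk : k ≠ 0) (hf : f = C ((k : ℚ))⁻¹ * (X ^ 2 - X)) (hpk : p ∣ k)
    (b : Bool) (l : List Bool) :
    (fun x : ℚ_[p] => aeval x f)^[l.length + 1] ((xf p k hpk b l : ℤ_[p]) : ℚ_[p]) =
      ((xf p k hpk b l : ℤ_[p]) : ℚ_[p]) := by
  conv_lhs => rw [← xf_fix p k hpk b l]
  have := phi_drop p k f hk hf hpk (b :: l) (xf p k hpk b l) (l.length + 1) (by simp)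
  rw [this]
  have h2 : List.drop (l.length + 1) (b :: l) = [] := by simp
  rw [h2]
  rfl

/-- the symbolic itinerary of the point indexed by `(w, u)`. -/
def seqS (w u : List Bool) (j : ℕ) : Bool :=
  if j < w.length then w.getD j false else u.getD ((j - w.length) % u.length) false

lemma traj (hk : k ≠ 0) (hf : f = C ((k : ℚ))⁻¹ * (X ^ 2 - X)) (hpk : p ∣ k)
    (w : List Bool) (b : Bool) (l : List Bool) (j : ℕ) :
    ‖(fun x : ℚ_[p] => aeval x f)^[j] ((pt p k hpk w (xf p k hpk b l) : ℤ_[p]) : ℚ_[p]) -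
      (cond (seqS w (b :: l) j) 1 0 : ℚ_[p])‖ ≤ (p:ℝ)⁻¹ := by
  by_cases hj : j < w.length
  · rw [phi_drop p k f hk hf hpk w _ j (le_of_lt hj), List.drop_eq_getElem_cons hj]
    have hs : seqS w (b :: l) j = w[j] := by
      simp [seqS, hj, List.getD_eq_getElem]
    rw [hs]
    exact rt_ball p k hpk _ _
  · push_neg at hj
    have hjj : j = (j - w.length) + w.length := by omega
    rw [hjj, Function.iterate_add_apply,
      phi_drop p k f hk hf hpk w _ w.length le_rfl, List.drop_length]
    have hx : ((pt p k hpk [] (xf p k hpk b l) : ℤ_[p]) : ℚ_[p]) =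
        ((xf p k hpk b l : ℤ_[p]) : ℚ_[p]) := rfl
    rw [hx]
    have hmod := iterate_mod (fun x : ℚ_[p] => aeval x f)
      ((xf p k hpk b l : ℤ_[p]) : ℚ_[p]) (l.length + 1) (Nat.succ_pos _)
      (xf_per p k f hk hf hpk b l) (j - w.length)
    rw [hmod]
    set r := (j - w.length) % (l.length + 1) with hr
    have hrlt : r < l.length + 1 := Nat.mod_lt _ (Nat.succ_pos _)
    have hrlt' : r < (b :: l).length := by simpa using hrlt
    conv_lhs => rw [← xf_fix p k hpk b l]
    rw [phi_drop p k f hk hf hpk (b :: l) _ r (le_of_lt hrlt')]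
    rw [List.drop_eq_getElem_cons hrlt']
    have hs : seqS w (b :: l) j = (b :: l)[r]'hrlt' := by
      simp only [seqS, if_neg (by omega : ¬ j < w.length), List.length_cons, ← hr]
      exact List.getD_eq_getElem _ _ hrlt'
    rw [← hjj, hs]
    exact rt_ball p k hpk _ _

lemma ball_disj (x : ℚ_[p]) (b₁ b₂ : Bool)
    (h1 : ‖x - (cond b₁ 1 0 : ℚ_[p])‖ ≤ (p:ℝ)⁻¹)
    (h2 : ‖x - (cond b₂ 1 0 : ℚ_[p])‖ ≤ (p:ℝ)⁻¹) : b₁ = b₂ := by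
  have key : ∀ z : ℚ_[p], ‖z‖ ≤ (p:ℝ)⁻¹ → ‖z - 1‖ ≤ (p:ℝ)⁻¹ → False := by
    intro z hz0 hz1
    have h3 : (1 : ℚ_[p]) = z + -(z - 1) := by ring
    have h4 : ‖(1 : ℚ_[p])‖ ≤ max ‖z‖ ‖-(z - 1)‖ := by
      conv_lhs => rw [h3]
      exact Padic.nonarchimedean _ _
    rw [norm_one, norm_neg] at h4
    have h5 := pinv_lt_one p (hp := hp)
    rcases max_cases ‖z‖ ‖z - 1‖ with ⟨he, _⟩ | ⟨he, _⟩ <;> rw [he] at h4 <;> linarith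
  cases b₁ <;> cases b₂
  · rfl
  · exact (key x (by simpa using h1) (by simpa using h2)).elim
  · exact (key x (by simpa using h2) (by simpa using h1)).elim
  · rfl


lemma inj_pt (hk : k ≠ 0) (hf : f = C ((k : ℚ))⁻¹ * (X ^ 2 - X)) (hpk : p ∣ k)
    (w w' : List Bool) (b b' : Bool) (l l' : List Bool)
    (hw : w.length = w'.length) (hl : l.length = l'.length)
    (heq : pt p k hpk w (xf p k hpk b l) = pt p k hpk w' (xf p k hpk b' l')) :
    w = w' ∧ b = b' ∧ l = l' := by
  have hseq : ∀ j, seqS w (b :: l) j = seqS w' (b' :: l') j := by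
    intro j
    have t1 := traj p k f hk hf hpk w b l j
    have t2 := traj p k f hk hf hpk w' b' l' j
    rw [← heq] at t2
    exact ball_disj p _ _ _ t1 t2
  have hww : w = w' := by
    apply List.ext_getElem hw
    intro i h1 h2
    have hIf := hseq i
    simp only [seqS, if_pos h1, if_pos h2] at hIf
    rwa [List.getD_eq_getElem _ _ h1, List.getD_eq_getElem _ _ h2] at hIf
  have hcons : (b :: l) = (b' :: l') := by
    apply List.ext_getElem (by simp [hl])
    intro i h1 h2
    have hIf := hseq (w'.length + i)
    have hnlt : ¬ (w'.length + i < w.length) := by omega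
    have hnlt' : ¬ (w'.length + i < w'.length) := by omega
    simp only [seqS, if_neg hnlt, if_neg hnlt'] at hIf
    have e1 : w'.length + i - w.length = i := by omega
    have e2 : w'.length + i - w'.length = i := by omega
    rw [e1, e2] at hIf
    rw [Nat.mod_eq_of_lt h1, Nat.mod_eq_of_lt h2] at hIf
    rwa [List.getD_eq_getElem _ _ h1, List.getD_eq_getElem _ _ h2] at hIf
  injection hcons with hb hll
  exact ⟨hww, hb, hll⟩

lemma natDegree_f (hk : k ≠ 0) (hf : f = C ((k : ℚ))⁻¹ * (X ^ 2 - X)) :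
    f.natDegree = 2 := by
  have h2 : ((X : ℚ[X]) ^ 2 - X).natDegree = 2 := by
    rw [natDegree_sub_eq_left_of_natDegree_lt (by simp)]
    simp
  rw [hf, natDegree_C_mul (inv_ne_zero (by exact_mod_cast Nat.cast_ne_zero.mpr hk)), h2]

lemma natDegree_fc (hk : k ≠ 0) (hf : f = C ((k : ℚ))⁻¹ * (X ^ 2 - X)) (n : ℕ) :
    (fc f n).natDegree = 2 ^ n := by
  induction n with
  | zero => simp [fc]
  | succ n ih =>
      rw [fc, natDegree_comp, ih, natDegree_f k f hk hf, pow_succ]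

lemma G_deg (hk : k ≠ 0) (hf : f = C ((k : ℚ))⁻¹ * (X ^ 2 - X)) (m n' : ℕ) :
    (fc f (m + (n' + 1)) - fc f m).natDegree = 2 ^ (m + (n' + 1)) := by
  rw [natDegree_sub_eq_left_of_natDegree_lt, natDegree_fc k f hk hf]
  rw [natDegree_fc k f hk hf, natDegree_fc k f hk hf]
  exact Nat.pow_lt_pow_right one_lt_two (by omega)

lemma G_ne_zero (hk : k ≠ 0) (hf : f = C ((k : ℚ))⁻¹ * (X ^ 2 - X)) (m n' : ℕ) :
    fc f (m + (n' + 1)) - fc f m ≠ 0 := by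
  intro h
  have hd := G_deg k f hk hf m n'
  rw [h, natDegree_zero] at hd
  have hpow : 0 < 2 ^ (m + (n' + 1)) := pow_pos (by norm_num) _
  omega

lemma splits_nodup (hk : k ≠ 0) (hf : f = C ((k : ℚ))⁻¹ * (X ^ 2 - X)) (hpk : p ∣ k)
    (m n' : ℕ) :
    Splits ((fc f (m + (n' + 1)) - fc f m).map (algebraMap ℚ ℚ_[p])) ∧
    ((fc f (m + (n' + 1)) - fc f m).map (algebraMap ℚ ℚ_[p])).roots.Nodup := by
  classical
  set G : ℚ[X] := fc f (m + (n' + 1)) - fc f m with hG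
  have hGdeg : G.natDegree = 2 ^ (m + (n' + 1)) := by
    rw [hG, natDegree_sub_eq_left_of_natDegree_lt, natDegree_fc k f hk hf]
    rw [natDegree_fc k f hk hf, natDegree_fc k f hk hf]
    exact Nat.pow_lt_pow_right one_lt_two (by omega)
  have hpow : 0 < 2 ^ (m + (n' + 1)) := pow_pos (by norm_num) _
  have hG0 : G ≠ 0 := by
    intro h
    rw [h, natDegree_zero] at hGdeg
    omega
  set Gq : ℚ_[p][X] := G.map (algebraMap ℚ ℚ_[p]) with hGq
  have hGq0 : Gq ≠ 0 := map_ne_zero hG0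
  have hGqdeg : Gq.natDegree = 2 ^ (m + (n' + 1)) := by
    rw [hGq, natDegree_map, hGdeg]
  -- the family of preperiodic points
  set Ψ : ((Fin m → Bool) × Bool × (Fin n' → Bool)) → ℚ_[p] := fun t =>
    ((pt p k hpk (List.ofFn t.1) (xf p k hpk t.2.1 (List.ofFn t.2.2)) : ℤ_[p]) : ℚ_[p])
    with hΨ
  have hfixm : ∀ t, (fun x : ℚ_[p] => aeval x f)^[m] (Ψ t) =
      ((xf p k hpk t.2.1 (List.ofFn t.2.2) : ℤ_[p]) : ℚ_[p]) := by
    intro t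
    have hlen : (List.ofFn t.1).length = m := List.length_ofFn
    rw [hΨ]
    simp only
    rw [phi_drop p k f hk hf hpk _ _ m (by rw [hlen])]
    have hdrop : List.drop m (List.ofFn t.1) = [] :=
      List.drop_eq_nil_of_le (le_of_eq hlen)
    rw [hdrop]
    rfl
  have hroot : ∀ t, aeval (Ψ t) G = 0 := by
    intro t
    rw [hG, map_sub, aeval_fc, aeval_fc]
    rw [Nat.add_comm m (n' + 1), Function.iterate_add_apply, hfixm t]
    have hlen2 : (List.ofFn t.2.2).length = n' := List.length_ofFn
    have hper := xf_per p k f hk hf hpk t.2.1 (List.ofFn t.2.2)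
    rw [hlen2] at hper
    rw [hper, sub_self]
  have hinj : Function.Injective Ψ := by
    intro t t' h
    rw [hΨ] at h
    simp only at h
    have h2 : pt p k hpk (List.ofFn t.1) (xf p k hpk t.2.1 (List.ofFn t.2.2)) =
        pt p k hpk (List.ofFn t'.1) (xf p k hpk t'.2.1 (List.ofFn t'.2.2)) :=
      Subtype.coe_injective h
    obtain ⟨hw, hb, hl⟩ := inj_pt p k f hk hf hpk _ _ _ _ _ _
      (by simp) (by simp) h2
    have hw' := List.ofFn_injective hw
    have hl' := List.ofFn_injective hl
    exact Prod.ext hw' (Prod.ext hb hl')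
  set R : Finset ℚ_[p] := Finset.image Ψ Finset.univ with hR
  have hcard : R.card = 2 ^ (m + (n' + 1)) := by
    rw [hR, Finset.card_image_of_injective _ hinj, Finset.card_univ]
    simp only [Fintype.card_prod, Fintype.card_fun, Fintype.card_bool, Fintype.card_fin]
    rw [pow_add, pow_succ]
    ring
  have hsub : R ⊆ Gq.roots.toFinset := by
    intro x hx
    rw [hR, Finset.mem_image] at hx
    obtain ⟨t, -, rfl⟩ := hx
    rw [Multiset.mem_toFinset, mem_roots']
    refine ⟨hGq0, ?_⟩
    show eval (Ψ t) Gq = 0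
    rw [hGq, eval_map, ← aeval_def]
    exact hroot t
  have h1 := Finset.card_le_card hsub
  have h2 := Multiset.toFinset_card_le Gq.roots
  have h3 := Polynomial.card_roots' Gq
  rw [hGqdeg] at h3
  rw [hcard] at h1
  have hcr : Multiset.card Gq.roots = Gq.natDegree := by
    rw [hGqdeg]
    set N := 2 ^ (m + (n' + 1))
    omega
  constructor
  · have hs := (Polynomial.splits_iff_card_roots).mpr hcr
    exact hs
  · apply Multiset.toFinset_card_eq_card_iff_nodup.mp
    rw [hGqdeg] at hcr
    set N := 2 ^ (m + (n' + 1))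
    omega


lemma main_splits (hk : k ≠ 0) (hf : f = C ((k : ℚ))⁻¹ * (X ^ 2 - X)) (hpk : p ∣ k)
    (α : AlgebraicClosure ℚ)
    (hα : (Set.range fun n => (fun x : AlgebraicClosure ℚ => aeval x f)^[n] α).Finite) :
    Splits ((minpoly ℚ α).map (algebraMap ℚ ℚ_[p])) := by
  have hninj : ¬ Function.Injective
      (fun n : ℕ => (fun x : AlgebraicClosure ℚ => aeval x f)^[n] α) := by
    intro hI
    exact (Set.infinite_range_of_injective hI) hα
  have key : ∃ m n' : ℕ, (fun x : AlgebraicClosure ℚ => aeval x f)^[m + (n' + 1)] α =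
      (fun x : AlgebraicClosure ℚ => aeval x f)^[m] α := by
    obtain ⟨i, j, heq, hne⟩ := Function.not_injective_iff.mp hninj
    rcases hne.lt_or_gt with h | h
    · exact ⟨i, j - i - 1, by rw [show i + (j - i - 1 + 1) = j by omega]; exact heq.symm⟩
    · exact ⟨j, i - j - 1, by rw [show j + (i - j - 1 + 1) = i by omega]; exact heq⟩
  obtain ⟨m, n', hmn⟩ := key
  have hroot : aeval α (fc f (m + (n' + 1)) - fc f m) = 0 := by
    rw [map_sub, aeval_fc, aeval_fc, hmn, sub_self]
  have hdvd := minpoly.dvd ℚ α hroot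
  exact (splits_nodup p k f hk hf hpk m n').1.of_dvd
    (map_ne_zero (G_ne_zero k f hk hf m n')) (Polynomial.map_dvd _ hdvd)

end Padic
end Ex36T


open Ex36T

/-- Example 3.6: let `S` be a finite nonempty set of primes, `k` their product, and
`f = (X² − X)/k ∈ ℚ[X]`.  Every preperiodic point of `f` in `ℚ̄` is totally `p`-adic for every
`p ∈ S` (its minimal polynomial over `ℚ` splits over `ℚ_p`), and `f` has infinitely many
preperiodic points in `ℚ̄`; in particular `⋂_{p ∈ S} ℚ^tp` contains infinitely many preperiodic
points of `f`. -/
theorem stmt_13 (S : Finset ℕ) (hSprime : ∀ q ∈ S, q.Prime) (hSne : S.Nonempty)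
    (k : ℕ) (hk : k = ∏ q ∈ S, q)
    (f : Polynomial ℚ) (hf : f = C ((k : ℚ))⁻¹ * (X ^ 2 - X)) :
    (∀ α : AlgebraicClosure ℚ,
      (Set.range fun n => (fun x : AlgebraicClosure ℚ => aeval x f)^[n] α).Finite →
      ∀ (p : ℕ) [Fact p.Prime], p ∈ S →
        Splits ((minpoly ℚ α).map (algebraMap ℚ ℚ_[p]))) ∧
    {α : AlgebraicClosure ℚ |
      (Set.range fun n => (fun x : AlgebraicClosure ℚ => aeval x f)^[n] α).Finite}.Infinite := by
  have hk0 : k ≠ 0 := by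
    rw [hk]
    exact Finset.prod_ne_zero_iff.mpr fun q hq => (hSprime q hq).ne_zero
  constructor
  · intro α hα p _ hpS
    exact main_splits p k f hk0 hf (hk ▸ Finset.dvd_prod_of_mem _ hpS) α hα
  · obtain ⟨p, hpS⟩ := hSne
    haveI : Fact p.Prime := ⟨hSprime p hpS⟩
    have hpk : p ∣ k := hk ▸ Finset.dvd_prod_of_mem _ hpS
    intro hfin
    set n' := hfin.toFinset.card with hn'
    set G : ℚ[X] := fc f (0 + (n' + 1)) - fc f 0 with hG
    have hsp := splits_nodup p k f hk0 hf hpk 0 n'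
    have hG0 : G ≠ 0 := G_ne_zero k f hk0 hf 0 n'
    have hsep : G.Separable := by
      have h1 : Splits (G.map (algebraMap ℚ ℚ_[p])) := by
        exact hsp.1
      have h2 := (nodup_roots_iff_of_splits (map_ne_zero hG0) h1).mp hsp.2
      exact (separable_map (algebraMap ℚ ℚ_[p])).mp h2
    have hcardroot : Fintype.card (G.rootSet (AlgebraicClosure ℚ)) = 2 ^ (0 + (n' + 1)) := by
      rw [card_rootSet_eq_natDegree hsep (IsAlgClosed.splits _)]
      exact G_deg k f hk0 hf 0 n'
    have hsub : G.rootSet (AlgebraicClosure ℚ) ⊆ {α : AlgebraicClosure ℚ |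
        (Set.range fun n => (fun x : AlgebraicClosure ℚ => aeval x f)^[n] α).Finite} := by
      intro α hα
      rw [mem_rootSet] at hα
      obtain ⟨-, hα⟩ := hα
      rw [hG, map_sub, aeval_fc, aeval_fc] at hα
      have hper : (fun x : AlgebraicClosure ℚ => aeval x f)^[n' + 1] α = α := by
        have h3 := sub_eq_zero.mp hα
        simpa using h3
      show (Set.range fun n => (fun x : AlgebraicClosure ℚ => aeval x f)^[n] α).Finite
      apply Set.Finite.subset
        ((Set.finite_Iio (n' + 1)).image (fun j => (fun x : AlgebraicClosure ℚ => aeval x f)^[j] α))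
      rintro x ⟨j, rfl⟩
      exact ⟨j % (n' + 1), Nat.mod_lt _ (Nat.succ_pos _),
        (iterate_mod _ α (n' + 1) (Nat.succ_pos _) hper j).symm⟩
    have hle : (Set.toFinset (G.rootSet (AlgebraicClosure ℚ))).card ≤ hfin.toFinset.card := by
      apply Finset.card_le_card
      intro x hx
      rw [Set.mem_toFinset] at hx
      rw [Set.Finite.mem_toFinset]
      exact hsub hx
    rw [Set.toFinset_card, hcardroot] at hle
    have hlt : n' < 2 ^ n' := Nat.lt_two_pow_self
    have h2 : 2 ^ n' ≤ 2 ^ (0 + (n' + 1)) := Nat.pow_le_pow_right (by norm_num) (by omega)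
    omega
end
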